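/- Let p ≥ 11 be a prime. Let K be the fraction field of the polynomial ring ℚ[z₄, z₆], and write A, B ∈ K for the images of z₄, z₆. Define α, β : ℕ → K by: α₀ = β₀ = 0; α₁ = A^p/(2B^p), β₁ = 0; α₂ = −A^{2p}/(8B^{2p}), β₂ = A^p/(4B^p); α₃ = A^{3p}/(16B^{3p}) + 1/(2B^p), β₃ = −A^{2p}/(8B^{2p}); α₄ = −5A^{4p}/(128B^{4p}) − A^p/(4B^{2p}), β₄ = 5A^{3p}/(64B^{3p}) + 3/(8B^p); and for 5 ≤ n ≤ p − 1: α_n = −((2n−3)/(2n))·(A^p/B^p)·α_{n−1} − ((2n−9)/(2n))·(1/B^p)·α_{n−3}, and the same recurrence for β. For n ≤ p − 2 set ψ_n := α_n·β_{n+1} − α_{n+1}·β_n. Then for every integer n with 1 ≤ n ≤ (p−3)/2 there exist polynomials Ψ_{2n}, Ψ_{2n−1} ∈ ℚ[z₄, z₆] such that: (i) every coefficient of Ψ_{2n} and of Ψ_{2n−1} is a rational number of nonnegative p-adic valuation; (ii) Ψ_{2n} is weighted homogeneous of degree 4n, and Ψ_{2n−1} is weighted homogeneous of degree 4n + 4,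 with respect to the weights z₄ ↦ 4, z₆ ↦ 6; (iii) in K one has B^{2np}·ψ_{2n} = Ψ_{2n}(A^p, B^p) and B^{2np}·ψ_{2n−1} = Ψ_{2n−1}(A^p, B^p). -/

import Mathlib

open MvPolynomial

section PsiAux

set_option linter.unusedSectionVars false

variable (p : ℕ) [Fact p.Prime]

def PGoodAux (P : MvPolynomial (Fin 2) ℚ) : Prop :=
  ∀ m : Fin 2 →₀ ℕ, padicNorm p (MvPolynomial.coeff m P) ≤ 1

variable {p}

lemma pgood_add {P Q : MvPolynomial (Fin 2) ℚ} (hP : PGoodAux p P) (hQ : PGoodAux p Q) :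
    PGoodAux p (P + Q) := fun m => by
  rw [MvPolynomial.coeff_add]
  exact le_trans padicNorm.nonarchimedean (max_le (hP m) (hQ m))

lemma pgood_mul {P Q : MvPolynomial (Fin 2) ℚ} (hP : PGoodAux p P) (hQ : PGoodAux p Q) :
    PGoodAux p (P * Q) := fun m => by
  rw [MvPolynomial.coeff_mul]
  refine Finset.sum_induction _ (fun q => padicNorm p q ≤ 1)
    (fun a b ha hb => le_trans padicNorm.nonarchimedean (max_le ha hb)) (by simp) ?_
  intro x _
  rw [padicNorm.mul]
  exact mul_le_one₀ (hP _) (padicNorm.nonneg _) (hQ _)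

lemma pgood_C {c : ℚ} (hc : padicNorm p c ≤ 1) : PGoodAux p (MvPolynomial.C c) := fun m => by
  rw [MvPolynomial.coeff_C]
  split_ifs
  · exact hc
  · simp

lemma pgood_X (i : Fin 2) : PGoodAux p (MvPolynomial.X i) := fun m => by
  rw [MvPolynomial.coeff_X']
  split_ifs <;> simp

lemma pnorm_natdiv (m k : ℕ) (hk : ¬ p ∣ k) : padicNorm p ((m : ℚ) / (k : ℚ)) ≤ 1 := by
  have h1 : padicNorm p (k : ℚ) = 1 := (padicNorm.nat_eq_one_iff k).mpr hk
  rw [padicNorm.div, h1, div_one]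
  exact padicNorm.of_nat m

lemma pnorm_intdiv (m : ℤ) (k : ℕ) (hk : ¬ p ∣ k) : padicNorm p ((m : ℚ) / (k : ℚ)) ≤ 1 := by
  have h1 : padicNorm p (k : ℚ) = 1 := (padicNorm.nat_eq_one_iff k).mpr hk
  rw [padicNorm.div, h1, div_one]
  exact padicNorm.of_int m

lemma val_nonneg_of_pnorm_le_one {q : ℚ} (h : padicNorm p q ≤ 1) :
    0 ≤ padicValRat p q := by
  rcases eq_or_ne q 0 with rfl | hq
  · simp
  · by_contra hneg
    push_neg at hneg
    rw [padicNorm.eq_zpow_of_nonzero hq] at h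
    have hp1 : (1:ℚ) < (p:ℚ) := by exact_mod_cast (Fact.out : p.Prime).one_lt
    have h2 : ((p:ℚ)) ^ (0:ℤ) < (p:ℚ) ^ (-padicValRat p q) :=
      zpow_lt_zpow_right₀ hp1 (by linarith)
    rw [zpow_zero] at h2
    linarith

end PsiAux

local notation "FR" => FractionRing (MvPolynomial (Fin 2) ℚ)

set_option maxHeartbeats 4000000 in
theorem psi_determinants_are_universal_weighted_homogeneous
    (p : ℕ) (hp : p.Prime) (hp11 : 11 ≤ p)
    (A B : FractionRing (MvPolynomial (Fin 2) ℚ))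
    (hA : A = algebraMap (MvPolynomial (Fin 2) ℚ)
      (FractionRing (MvPolynomial (Fin 2) ℚ)) (MvPolynomial.X 0))
    (hB : B = algebraMap (MvPolynomial (Fin 2) ℚ)
      (FractionRing (MvPolynomial (Fin 2) ℚ)) (MvPolynomial.X 1))
    (α β : ℕ → FractionRing (MvPolynomial (Fin 2) ℚ))
    (hα0 : α 0 = 0) (hβ0 : β 0 = 0)
    (hα1 : α 1 = A ^ p / (2 * B ^ p)) (hβ1 : β 1 = 0)
    (hα2 : α 2 = -(A ^ (2 * p) / (8 * B ^ (2 * p)))) (hβ2 : β 2 = A ^ p / (4 * B ^ p))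
    (hα3 : α 3 = A ^ (3 * p) / (16 * B ^ (3 * p)) + 1 / (2 * B ^ p))
    (hβ3 : β 3 = -(A ^ (2 * p) / (8 * B ^ (2 * p))))
    (hα4 : α 4 = -(5 * A ^ (4 * p) / (128 * B ^ (4 * p))) - A ^ p / (4 * B ^ (2 * p)))
    (hβ4 : β 4 = 5 * A ^ (3 * p) / (64 * B ^ (3 * p)) + 3 / (8 * B ^ p))
    (hαrec : ∀ n : ℕ, 5 ≤ n → n ≤ p - 1 →
      α n = -((((2 * n - 3 : ℕ) : FractionRing (MvPolynomial (Fin 2) ℚ))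
                / ((2 * n : ℕ) : FractionRing (MvPolynomial (Fin 2) ℚ)))
              * (A ^ p / B ^ p) * α (n - 1))
        - (((2 * n - 9 : ℕ) : FractionRing (MvPolynomial (Fin 2) ℚ))
              / ((2 * n : ℕ) : FractionRing (MvPolynomial (Fin 2) ℚ)))
            * (1 / B ^ p) * α (n - 3))
    (hβrec : ∀ n : ℕ, 5 ≤ n → n ≤ p - 1 →
      β n = -((((2 * n - 3 : ℕ) : FractionRing (MvPolynomial (Fin 2) ℚ))
                / ((2 * n : ℕ) : FractionRing (MvPolynomial (Fin 2) ℚ)))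
              * (A ^ p / B ^ p) * β (n - 1))
        - (((2 * n - 9 : ℕ) : FractionRing (MvPolynomial (Fin 2) ℚ))
              / ((2 * n : ℕ) : FractionRing (MvPolynomial (Fin 2) ℚ)))
            * (1 / B ^ p) * β (n - 3))
    (ψ : ℕ → FractionRing (MvPolynomial (Fin 2) ℚ))
    (hψ : ∀ j : ℕ, ψ j = α j * β (j + 1) - α (j + 1) * β j) :
    ∀ n : ℕ, 1 ≤ n → n ≤ (p - 3) / 2 →
      ∃ Ψe Ψo : MvPolynomial (Fin 2) ℚ,
        (∀ m : Fin 2 →₀ ℕ, 0 ≤ padicValRat p (MvPolynomial.coeff m Ψe)) ∧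
        (∀ m : Fin 2 →₀ ℕ, 0 ≤ padicValRat p (MvPolynomial.coeff m Ψo)) ∧
        Ψe.IsWeightedHomogeneous (![4, 6] : Fin 2 → ℕ) (4 * n) ∧
        Ψo.IsWeightedHomogeneous (![4, 6] : Fin 2 → ℕ) (4 * n + 4) ∧
        B ^ (2 * n * p) * ψ (2 * n) = MvPolynomial.aeval ![A ^ p, B ^ p] Ψe ∧
        B ^ (2 * n * p) * ψ (2 * n - 1) = MvPolynomial.aeval ![A ^ p, B ^ p] Ψo := by
  haveI : Fact p.Prime := ⟨hp⟩
  have hKinj : Function.Injective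
      (algebraMap (MvPolynomial (Fin 2) ℚ) (FractionRing (MvPolynomial (Fin 2) ℚ))) :=
    IsFractionRing.injective _ _
  haveI : CharZero (FractionRing (MvPolynomial (Fin 2) ℚ)) :=
    charZero_of_injective_algebraMap hKinj
  have hB0 : B ≠ 0 := by
    rw [hB]
    intro h
    exact MvPolynomial.X_ne_zero (R := ℚ) (1 : Fin 2)
      (hKinj (show _ = algebraMap (MvPolynomial (Fin 2) ℚ) _ 0 by rw [map_zero]; exact h))
  have hoddp : p % 2 = 1 := Nat.odd_iff.mp (hp.odd_of_ne_two (by omega))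
  have hpw : ∀ (C : FR) (k : ℕ), C^(k*p) = (C^p)^k :=
    fun C k => by rw [mul_comm, pow_mul]
  rw [hpw A 2, hpw B 2] at hα2 hβ3
  rw [hpw A 3, hpw B 3] at hα3
  rw [hpw A 4, hpw B 4, hpw B 2] at hα4
  rw [hpw A 3, hpw B 3] at hβ4
  obtain ⟨x, hxdef⟩ : ∃ t, t = A ^ p := ⟨_, rfl⟩
  obtain ⟨y, hydef⟩ : ∃ t, t = B ^ p := ⟨_, rfl⟩
  simp only [← hxdef, ← hydef] at hα1 hα2 hβ2 hα3 hβ3 hα4 hβ4 hαrec hβrec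
  have hy' : y ≠ 0 := by rw [hydef]; exact pow_ne_zero _ hB0
  -- divisibility helpers
  have hnds : ∀ a b : ℕ, ¬ p ∣ 2^a * 5^b := by
    intro a b h
    rcases (Nat.Prime.dvd_mul hp).mp h with h'|h'
    · have h2 := Nat.Prime.dvd_of_dvd_pow hp h'
      have := Nat.le_of_dvd (by norm_num) h2; omega
    · have h5 := Nat.Prime.dvd_of_dvd_pow hp h'
      have := Nat.le_of_dvd (by norm_num) h5; omega
  have h8 : ¬ p ∣ 8 := by have := hnds 3 0; norm_num at this; exact this
  have h16 : ¬ p ∣ 16 := by have := hnds 4 0; norm_num at this; exact this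
  have h32 : ¬ p ∣ 32 := by have := hnds 5 0; norm_num at this; exact this
  have h640 : ¬ p ∣ 640 := by have := hnds 7 1; norm_num at this; exact this
  have hndp : ∀ k1 k2 : ℕ, 0 < k1 → k1 < p → 0 < k2 → k2 < p → ¬ p ∣ (2*k1) * (2*k2) := by
    intro k1 k2 ha hb hc hd h
    rcases (Nat.Prime.dvd_mul hp).mp h with h'|h' <;>
      rcases (Nat.Prime.dvd_mul hp).mp h' with h''|h''
    · have := Nat.le_of_dvd (by norm_num) h''; omega
    · have := Nat.le_of_dvd ha h''; omega
    · have := Nat.le_of_dvd (by norm_num) h''; omega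
    · have := Nat.le_of_dvd hc h''; omega
  -- constant maker
  have mkc : ∀ (m k : ℕ), k ≠ 0 → ¬ p ∣ k → ∃ c : ℚ, padicNorm p c ≤ 1 ∧
      (algebraMap ℚ FR c) * ((k : ℕ) : FR) = ((m : ℕ) : FR) := by
    intro m k hk0 hk
    refine ⟨(m:ℚ)/(k:ℚ), pnorm_natdiv _ _ hk, ?_⟩
    rw [map_div₀, map_natCast, map_natCast, div_mul_cancel₀]
    exact Nat.cast_ne_zero.mpr hk0
  -- cleared small values
  have a1 : 2*y*α 1 = x := by rw [hα1]; field_simp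
  have a2 : 8*y^2*α 2 = -x^2 := by rw [hα2]; field_simp
  have b2 : 4*y*β 2 = x := by rw [hβ2]; field_simp
  have a3 : 16*y^3*α 3 = x^3 + 8*y^2 := by rw [hα3]; field_simp; ring
  have b3 : 8*y^2*β 3 = -x^2 := by rw [hβ3]; field_simp
  have a4 : 128*y^4*α 4 = -(5*x^4) - 32*x*y^2 := by rw [hα4]; field_simp; ring
  have b4 : 64*y^3*β 4 = 5*x^3 + 24*y^2 := by rw [hβ4]; field_simp; ring
  -- cleared recurrences
  have Rα : ∀ j : ℕ, 5 ≤ j → j ≤ p-1 →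
      ((2*j : ℕ) : FR) * (y * α j)
        = -(((2*j-3 : ℕ) : FR) * (x * α (j-1))) - ((2*j-9 : ℕ) : FR) * α (j-3) := by
    intro j h1 h2
    have hc : ((2*j : ℕ) : FR) ≠ 0 := Nat.cast_ne_zero.mpr (by omega)
    rw [hαrec j h1 h2]
    have hyy : y * y⁻¹ = 1 := mul_inv_cancel₀ hy'
    have hNN : ((2*j : ℕ) : FR) * ((2*j : ℕ) : FR)⁻¹ = 1 := mul_inv_cancel₀ hc
    linear_combination (-(((2*j-3 : ℕ) : FR)*(x*α (j-1)) + ((2*j-9 : ℕ) : FR)*α (j-3))) * hyy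
      + (-((((2*j-3 : ℕ) : FR)*(x*α (j-1)) + ((2*j-9 : ℕ) : FR)*α (j-3)) * (y * y⁻¹))) * hNN
  have Rβ : ∀ j : ℕ, 5 ≤ j → j ≤ p-1 →
      ((2*j : ℕ) : FR) * (y * β j)
        = -(((2*j-3 : ℕ) : FR) * (x * β (j-1))) - ((2*j-9 : ℕ) : FR) * β (j-3) := by
    intro j h1 h2
    have hc : ((2*j : ℕ) : FR) ≠ 0 := Nat.cast_ne_zero.mpr (by omega)
    rw [hβrec j h1 h2]
    have hyy : y * y⁻¹ = 1 := mul_inv_cancel₀ hy'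
    have hNN : ((2*j : ℕ) : FR) * ((2*j : ℕ) : FR)⁻¹ = 1 := mul_inv_cancel₀ hc
    linear_combination (-(((2*j-3 : ℕ) : FR)*(x*β (j-1)) + ((2*j-9 : ℕ) : FR)*β (j-3))) * hyy
      + (-((((2*j-3 : ℕ) : FR)*(x*β (j-1)) + ((2*j-9 : ℕ) : FR)*β (j-3)) * (y * y⁻¹))) * hNN
  -- α5, β5 cleared
  have h5a := Rα 5 (by norm_num) (by omega)
  have h5b := Rβ 5 (by norm_num) (by omega)
  norm_num at h5a h5b
  have a5 : 1280*y^5*α 5 = 35*x^5 + 240*x^2*y^2 := by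
    linear_combination (128*y^4) * h5a - (7*x)*a4 - (16*y^2)*a2
  have b5 : 640*y^4*β 5 = -(35*x^4) - 184*x*y^2 := by
    linear_combination (64*y^3) * h5b - (7*x)*b4 - (16*y^2)*b2
  -- ψ small values
  have hψ1 : ψ 1 = α 1 * β 2 - α 2 * β 1 := by simpa using hψ 1
  have hψ2 : ψ 2 = α 2 * β 3 - α 3 * β 2 := by simpa using hψ 2
  have hψ3 : ψ 3 = α 3 * β 4 - α 4 * β 3 := by simpa using hψ 3
  have hψ4 : ψ 4 = α 4 * β 5 - α 5 * β 4 := by simpa using hψ 4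
  have e1 : y^2 * ψ 1 = (1/8)*x^2 := by
    apply mul_left_cancel₀ (show (8 : FR) ≠ 0 by norm_num)
    have P0 : (2*y*α 1) * (4*y*β 2) = x * x := by rw [a1, b2]
    linear_combination (8*y^2)*hψ1 + P0 - (8*y^2*α 2)*hβ1
  have e2 : y^2 * ψ 2 = -((1/8)*x) := by
    apply mul_left_cancel₀ (show ((64:FR)*y^2) ≠ 0 from
      mul_ne_zero (by norm_num) (pow_ne_zero _ hy'))
    have P1 : (8*y^2*α 2) * (8*y^2*β 3) = (-x^2) * (-x^2) := by rw [a2, b3]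
    have P2 : (16*y^3*α 3) * (4*y*β 2) = (x^3 + 8*y^2) * x := by rw [a3, b2]
    linear_combination (64*y^4)*hψ2 + P1 - P2
  have e3 : y^4 * ψ 3 = (1/32)*x^3 + (3/16)*y^2 := by
    apply mul_left_cancel₀ (show ((1024:FR)*y^2) ≠ 0 from
      mul_ne_zero (by norm_num) (pow_ne_zero _ hy'))
    have P3 : (16*y^3*α 3) * (64*y^3*β 4) = (x^3 + 8*y^2) * (5*x^3 + 24*y^2) := by rw [a3, b4]
    have P4 : (128*y^4*α 4) * (8*y^2*β 3) = (-(5*x^4) - 32*x*y^2) * (-x^2) := by rw [a4, b3]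
    linear_combination (1024*y^6)*hψ3 + P3 - P4
  have e4 : y^4 * ψ 4 = (1/640)*x^2 := by
    apply mul_left_cancel₀ (show ((81920:FR)*y^4) ≠ 0 from
      mul_ne_zero (by norm_num) (pow_ne_zero _ hy'))
    have P5 : (128*y^4*α 4) * (640*y^4*β 5)
        = (-(5*x^4) - 32*x*y^2) * (-(35*x^4) - 184*x*y^2) := by rw [a4, b5]
    have P6 : (1280*y^5*α 5) * (64*y^3*β 4)
        = (35*x^5 + 240*x^2*y^2) * (5*x^3 + 24*y^2) := by rw [a5, b4]
    linear_combination (81920*y^8)*hψ4 + P5 - P6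
  -- the key recurrence for ψ, cleared form
  have hE : ∀ j : ℕ, 5 ≤ j → j + 1 ≤ p - 1 →
      ((2*(j+1) : ℕ) : FR) * ((2*j : ℕ) : FR) * (y^2 * ψ j)
        = -(((2*(j+1)-9 : ℕ) : FR) * ((2*j-3 : ℕ) : FR) * (x * ψ (j-2)))
          + ((2*(j+1)-9 : ℕ) : FR) * ((2*j-9 : ℕ) : FR) * ψ (j-3) := by
    intro j hj5 hjp
    have Ra1 := Rα (j+1) (by omega) hjp
    have Rb1 := Rβ (j+1) (by omega) hjp
    rw [show j+1-1 = j from by omega, show j+1-3 = j-2 from by omega] at Ra1 Rb1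
    have Raj := Rα j hj5 (by omega)
    have Rbj := Rβ j hj5 (by omega)
    have hψj := hψ j
    have hψ2' : ψ (j-2) = α (j-2) * β (j-1) - α (j-1) * β (j-2) := by
      rw [hψ (j-2), show j-2+1 = j-1 from by omega]
    have hψ3' : ψ (j-3) = α (j-3) * β (j-2) - α (j-2) * β (j-3) := by
      rw [hψ (j-3), show j-3+1 = j-2 from by omega]
    linear_combination
      (((2*(j+1) : ℕ) : FR) * ((2*j : ℕ) : FR) * y^2) * hψj
      + (((2*j : ℕ) : FR) * y * α j) * Rb1
      - (((2*j : ℕ) : FR) * y * β j) * Ra1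
      - (((2*(j+1)-9 : ℕ) : FR) * β (j-2)) * Raj
      + (((2*(j+1)-9 : ℕ) : FR) * α (j-2)) * Rbj
      + (((2*(j+1)-9 : ℕ) : FR) * ((2*j-3 : ℕ) : FR) * x) * hψ2'
      - (((2*(j+1)-9 : ℕ) : FR) * ((2*j-9 : ℕ) : FR)) * hψ3'
  -- main induction
  have key : ∀ n : ℕ, 1 ≤ n → 2 * n ≤ p - 3 →
      ∃ Ψe Ψo : MvPolynomial (Fin 2) ℚ,
        PGoodAux p Ψe ∧ PGoodAux p Ψo ∧
        Ψe.IsWeightedHomogeneous (![4, 6] : Fin 2 → ℕ) (4 * n) ∧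
        Ψo.IsWeightedHomogeneous (![4, 6] : Fin 2 → ℕ) (4 * n + 4) ∧
        y ^ (2 * n) * ψ (2 * n) = MvPolynomial.aeval ![x, y] Ψe ∧
        y ^ (2 * n) * ψ (2 * n - 1) = MvPolynomial.aeval ![x, y] Ψo := by
    intro n
    induction n using Nat.strong_induction_on with
    | _ n IH =>
    intro hn1 hn2
    rcases eq_or_ne n 1 with rfl | hne1
    · have hc1 : padicNorm p (-(1/8 : ℚ)) ≤ 1 := by
        rw [show (-(1/8 : ℚ)) = ((-1 : ℤ) : ℚ)/((8:ℕ) : ℚ) by norm_num]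
        exact pnorm_intdiv _ _ h8
      have hc2 : padicNorm p ((1/8 : ℚ)) ≤ 1 := by
        rw [show ((1/8 : ℚ)) = ((1 : ℤ) : ℚ)/((8:ℕ) : ℚ) by norm_num]
        exact pnorm_intdiv _ _ h8
      refine ⟨MvPolynomial.C (-(1/8 : ℚ)) * MvPolynomial.X 0,
        MvPolynomial.C (1/8 : ℚ) * (MvPolynomial.X 0 * MvPolynomial.X 0),
        pgood_mul (pgood_C hc1) (pgood_X 0),
        pgood_mul (pgood_C hc2) (pgood_mul (pgood_X 0) (pgood_X 0)), ?_, ?_, ?_, ?_⟩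
      · have t := (isWeightedHomogeneous_C (R := ℚ) ![4,6] (-(1/8 : ℚ))).mul
          (isWeightedHomogeneous_X ℚ ![4,6] 0)
        have hd : (0 : ℕ) + (![4,6] : Fin 2 → ℕ) 0 = 4*1 := by
          simp only [Matrix.cons_val_zero]
        exact hd ▸ t
      · have t := (isWeightedHomogeneous_C (R := ℚ) ![4,6] ((1/8 : ℚ))).mul
          ((isWeightedHomogeneous_X ℚ ![4,6] 0).mul (isWeightedHomogeneous_X ℚ ![4,6] 0))
        have hd : (0 : ℕ) + ((![4,6] : Fin 2 → ℕ) 0 + (![4,6] : Fin 2 → ℕ) 0) = 4*1+4 := by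
          simp only [Matrix.cons_val_zero]
        exact hd ▸ t
      · rw [show (2*1 : ℕ) = 2 from rfl, e2]
        simp only [map_mul, map_neg, MvPolynomial.aeval_C, MvPolynomial.aeval_X,
          Matrix.cons_val_zero, map_div₀, map_one, map_ofNat]
        ring
      · rw [show (2*1 : ℕ) = 2 from rfl, show (2-1 : ℕ) = 1 from rfl, e1]
        simp only [map_mul, MvPolynomial.aeval_C, MvPolynomial.aeval_X,
          Matrix.cons_val_zero, map_div₀, map_one, map_ofNat]
        ring
    rcases eq_or_ne n 2 with rfl | hne2
    · have hc1 : padicNorm p ((1/640 : ℚ)) ≤ 1 := by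
        rw [show ((1/640 : ℚ)) = ((1 : ℤ) : ℚ)/((640:ℕ) : ℚ) by norm_num]
        exact pnorm_intdiv _ _ h640
      have hc2 : padicNorm p ((1/32 : ℚ)) ≤ 1 := by
        rw [show ((1/32 : ℚ)) = ((1 : ℤ) : ℚ)/((32:ℕ) : ℚ) by norm_num]
        exact pnorm_intdiv _ _ h32
      have hc3 : padicNorm p ((3/16 : ℚ)) ≤ 1 := by
        rw [show ((3/16 : ℚ)) = ((3 : ℤ) : ℚ)/((16:ℕ) : ℚ) by norm_num]
        exact pnorm_intdiv _ _ h16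
      refine ⟨MvPolynomial.C (1/640 : ℚ) * (MvPolynomial.X 0 * MvPolynomial.X 0),
        MvPolynomial.C (1/32 : ℚ) * (MvPolynomial.X 0 * (MvPolynomial.X 0 * MvPolynomial.X 0))
          + MvPolynomial.C (3/16 : ℚ) * (MvPolynomial.X 1 * MvPolynomial.X 1),
        pgood_mul (pgood_C hc1) (pgood_mul (pgood_X 0) (pgood_X 0)),
        pgood_add (pgood_mul (pgood_C hc2) (pgood_mul (pgood_X 0) (pgood_mul (pgood_X 0) (pgood_X 0))))
          (pgood_mul (pgood_C hc3) (pgood_mul (pgood_X 1) (pgood_X 1))), ?_, ?_, ?_, ?_⟩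
      · have t := (isWeightedHomogeneous_C (R := ℚ) ![4,6] ((1/640 : ℚ))).mul
          ((isWeightedHomogeneous_X ℚ ![4,6] 0).mul (isWeightedHomogeneous_X ℚ ![4,6] 0))
        have hd : (0 : ℕ) + ((![4,6] : Fin 2 → ℕ) 0 + (![4,6] : Fin 2 → ℕ) 0) = 4*2 := by
          simp only [Matrix.cons_val_zero]
        exact hd ▸ t
      · have t1 := (isWeightedHomogeneous_C (R := ℚ) ![4,6] ((1/32 : ℚ))).mul
          ((isWeightedHomogeneous_X ℚ ![4,6] 0).mul
            ((isWeightedHomogeneous_X ℚ ![4,6] 0).mul (isWeightedHomogeneous_X ℚ ![4,6] 0)))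
        have t2 := (isWeightedHomogeneous_C (R := ℚ) ![4,6] ((3/16 : ℚ))).mul
          ((isWeightedHomogeneous_X ℚ ![4,6] 1).mul (isWeightedHomogeneous_X ℚ ![4,6] 1))
        have hd1 : (0 : ℕ) + ((![4,6] : Fin 2 → ℕ) 0 + ((![4,6] : Fin 2 → ℕ) 0 + (![4,6] : Fin 2 → ℕ) 0)) = 4*2+4 := by
          simp only [Matrix.cons_val_zero]
        have hd2 : (0 : ℕ) + ((![4,6] : Fin 2 → ℕ) 1 + (![4,6] : Fin 2 → ℕ) 1) = 4*2+4 := by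
          simp only [Matrix.cons_val_one, Matrix.head_cons, Matrix.cons_val_zero]
        exact (hd1 ▸ t1).add (hd2 ▸ t2)
      · rw [show (2*2 : ℕ) = 4 from rfl, e4]
        simp only [map_mul, MvPolynomial.aeval_C, MvPolynomial.aeval_X,
          Matrix.cons_val_zero, map_div₀, map_one, map_ofNat]
        ring
      · rw [show (2*2 : ℕ) = 4 from rfl, show (4-1 : ℕ) = 3 from rfl, e3]
        simp only [map_add, map_mul, MvPolynomial.aeval_C, MvPolynomial.aeval_X,
          Matrix.cons_val_zero, Matrix.cons_val_one, Matrix.head_cons, map_div₀, map_one, map_ofNat]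
        ring
    -- inductive step
    obtain ⟨k, rfl⟩ : ∃ k, n = k + 2 := ⟨n - 2, by omega⟩
    have hk1 : 1 ≤ k := by omega
    obtain ⟨P1e, P1o, hg1e, hg1o, hh1e, hh1o, hv1e, hv1o⟩ := IH (k+1) (by omega) (by omega) (by omega)
    obtain ⟨P2e, P2o, hg2e, hg2o, hh2e, hh2o, hv2e, hv2o⟩ := IH k (by omega) (by omega) (by omega)
    rw [show 2*(k+1) = 2*k+2 from by ring] at hv1e hv1o
    rw [show 2*k+2-1 = 2*k+1 from by omega] at hv1o
    -- constants for j = 2k+4 (even goal)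
    obtain ⟨ce, hcen, hce⟩ := mkc ((2*(2*k+4+1)-9) * (2*(2*k+4)-3)) ((2*(2*k+4+1)) * (2*(2*k+4)))
      (Nat.mul_ne_zero (by omega) (by omega)) (hndp (2*k+4+1) (2*k+4) (by omega) (by omega) (by omega) (by omega))
    obtain ⟨co, hcon, hco⟩ := mkc ((2*(2*k+4+1)-9) * (2*(2*k+4)-9)) ((2*(2*k+4+1)) * (2*(2*k+4)))
      (Nat.mul_ne_zero (by omega) (by omega)) (hndp (2*k+4+1) (2*k+4) (by omega) (by omega) (by omega) (by omega))
    rw [Nat.cast_mul, Nat.cast_mul] at hce hco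
    -- constants for j = 2k+3 (odd goal)
    obtain ⟨ce2, hcen2, hce2⟩ := mkc ((2*(2*k+3+1)-9) * (2*(2*k+3)-3)) ((2*(2*k+3+1)) * (2*(2*k+3)))
      (Nat.mul_ne_zero (by omega) (by omega)) (hndp (2*k+3+1) (2*k+3) (by omega) (by omega) (by omega) (by omega))
    obtain ⟨co2, hcon2, hco2⟩ := mkc ((2*(2*k+3+1)-9) * (2*(2*k+3)-9)) ((2*(2*k+3+1)) * (2*(2*k+3)))
      (Nat.mul_ne_zero (by omega) (by omega)) (hndp (2*k+3+1) (2*k+3) (by omega) (by omega) (by omega) (by omega))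
    rw [Nat.cast_mul, Nat.cast_mul] at hce2 hco2
    have hEj := hE (2*k+4) (by omega) (by omega)
    rw [show 2*k+4-2 = 2*k+2 from by omega, show 2*k+4-3 = 2*k+1 from by omega] at hEj
    have hEj2 := hE (2*k+3) (by omega) (by omega)
    rw [show 2*k+3-2 = 2*k+1 from by omega, show 2*k+3-3 = 2*k from by omega] at hEj2
    refine ⟨MvPolynomial.C (-ce) * (MvPolynomial.X 0 * P1e) + MvPolynomial.C co * P1o,
      MvPolynomial.C (-ce2) * (MvPolynomial.X 0 * P1o)
        + MvPolynomial.C co2 * (MvPolynomial.X 1 * (MvPolynomial.X 1 * P2e)),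
      ?_, ?_, ?_, ?_, ?_, ?_⟩
    · exact pgood_add
        (pgood_mul (pgood_C (by rw [padicNorm.neg]; exact hcen)) (pgood_mul (pgood_X 0) hg1e))
        (pgood_mul (pgood_C hcon) hg1o)
    · exact pgood_add
        (pgood_mul (pgood_C (by rw [padicNorm.neg]; exact hcen2)) (pgood_mul (pgood_X 0) hg1o))
        (pgood_mul (pgood_C hcon2) (pgood_mul (pgood_X 1) (pgood_mul (pgood_X 1) hg2e)))
    · have t1 := (isWeightedHomogeneous_C (R := ℚ) ![4,6] (-ce)).mul
        ((isWeightedHomogeneous_X ℚ ![4,6] 0).mul hh1e)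
      have t2 := (isWeightedHomogeneous_C (R := ℚ) ![4,6] co).mul hh1o
      have hd1 : (0 : ℕ) + ((![4,6] : Fin 2 → ℕ) 0 + 4*(k+1)) = 4*(k+2) := by
        simp only [Matrix.cons_val_zero]; omega
      have hd2 : (0 : ℕ) + (4*(k+1)+4) = 4*(k+2) := by omega
      exact (hd1 ▸ t1).add (hd2 ▸ t2)
    · have t1 := (isWeightedHomogeneous_C (R := ℚ) ![4,6] (-ce2)).mul
        ((isWeightedHomogeneous_X ℚ ![4,6] 0).mul hh1o)
      have t2 := (isWeightedHomogeneous_C (R := ℚ) ![4,6] co2).mul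
        ((isWeightedHomogeneous_X ℚ ![4,6] 1).mul ((isWeightedHomogeneous_X ℚ ![4,6] 1).mul hh2e))
      have hd1 : (0 : ℕ) + ((![4,6] : Fin 2 → ℕ) 0 + (4*(k+1)+4)) = 4*(k+2)+4 := by
        simp only [Matrix.cons_val_zero]; omega
      have hd2 : (0 : ℕ) + ((![4,6] : Fin 2 → ℕ) 1 + ((![4,6] : Fin 2 → ℕ) 1 + 4*k)) = 4*(k+2)+4 := by
        simp only [Matrix.cons_val_one, Matrix.head_cons, Matrix.cons_val_zero]; omega
      exact (hd1 ▸ t1).add (hd2 ▸ t2)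
    · -- even evaluation
      rw [show (2*(k+2) : ℕ) = 2*k+4 from by ring]
      apply mul_left_cancel₀ (show (((2*(2*k+4+1) : ℕ) : FR) * ((2*(2*k+4) : ℕ) : FR)) ≠ 0 from
        mul_ne_zero (Nat.cast_ne_zero.mpr (by omega)) (Nat.cast_ne_zero.mpr (by omega)))
      have hev : MvPolynomial.aeval (![x, y] : Fin 2 → FR)
          (MvPolynomial.C (-ce) * (MvPolynomial.X 0 * P1e) + MvPolynomial.C co * P1o)
          = -(algebraMap ℚ FR ce) * (x * MvPolynomial.aeval ![x, y] P1e)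
            + algebraMap ℚ FR co * MvPolynomial.aeval ![x, y] P1o := by
        simp only [map_add, map_mul, map_neg, MvPolynomial.aeval_C, MvPolynomial.aeval_X,
          Matrix.cons_val_zero]
      rw [hev]
      linear_combination (norm := (push_cast; ring1)) (y^(2*k+2)) * hEj
        - (((2*(2*k+4+1)-9 : ℕ) : FR) * ((2*(2*k+4)-3 : ℕ) : FR) * x) * hv1e
        + (((2*(2*k+4+1)-9 : ℕ) : FR) * ((2*(2*k+4)-9 : ℕ) : FR)) * hv1o
        + (x * MvPolynomial.aeval (![x, y] : Fin 2 → FR) P1e) * hce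
        - (MvPolynomial.aeval (![x, y] : Fin 2 → FR) P1o) * hco
    · -- odd evaluation
      rw [show (2*(k+2) : ℕ) = 2*k+4 from by ring, show 2*k+4-1 = 2*k+3 from by omega]
      apply mul_left_cancel₀ (show (((2*(2*k+3+1) : ℕ) : FR) * ((2*(2*k+3) : ℕ) : FR)) ≠ 0 from
        mul_ne_zero (Nat.cast_ne_zero.mpr (by omega)) (Nat.cast_ne_zero.mpr (by omega)))
      have hev : MvPolynomial.aeval (![x, y] : Fin 2 → FR)
          (MvPolynomial.C (-ce2) * (MvPolynomial.X 0 * P1o)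
            + MvPolynomial.C co2 * (MvPolynomial.X 1 * (MvPolynomial.X 1 * P2e)))
          = -(algebraMap ℚ FR ce2) * (x * MvPolynomial.aeval ![x, y] P1o)
            + algebraMap ℚ FR co2 * (y * (y * MvPolynomial.aeval ![x, y] P2e)) := by
        simp only [map_add, map_mul, map_neg, MvPolynomial.aeval_C, MvPolynomial.aeval_X,
          Matrix.cons_val_zero, Matrix.cons_val_one, Matrix.head_cons]
      rw [hev]
      linear_combination (norm := (push_cast; ring1)) (y^(2*k+2)) * hEj2
        - (((2*(2*k+3+1)-9 : ℕ) : FR) * ((2*(2*k+3)-3 : ℕ) : FR) * x) * hv1o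
        + (((2*(2*k+3+1)-9 : ℕ) : FR) * ((2*(2*k+3)-9 : ℕ) : FR) * y^2) * hv2e
        + (x * MvPolynomial.aeval (![x, y] : Fin 2 → FR) P1o) * hce2
        - (y^2 * MvPolynomial.aeval (![x, y] : Fin 2 → FR) P2e) * hco2
  -- conclude
  intro n hn1 hn2
  obtain ⟨Ψe, Ψo, hge, hgo, hhe, hho, hve, hvo⟩ := key n hn1 (by omega)
  refine ⟨Ψe, Ψo, fun mm => val_nonneg_of_pnorm_le_one (hge mm),
    fun mm => val_nonneg_of_pnorm_le_one (hgo mm), hhe, hho, ?_, ?_⟩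
  · rw [show 2*n*p = p*(2*n) from by ring, pow_mul, ← hydef, ← hxdef]
    exact hve
  · rw [show 2*n*p = p*(2*n) from by ring, pow_mul, ← hydef, ← hxdef]
    exact hvo
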